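/- Let N be a quantum channel from A to B and P a quantum channel from A^{⊗n} to B^{⊗n}, n ≥ 1, and let π be the maximally mixed state on A. For 0 ≤ i ≤ n define the reduced channel P_{1:i} from A^{⊗i} to B^{⊗i} by P_{1:i}(X) := tr_{B_{i+1}⋯B_n} P(X ⊗ π^{⊗(n−i)}) (so P_{1:n} = P and P_{1:0} is trivial). Define the channel G₂ from A^{⊗n} to B^{⊗n}⊗ℂ^n by G₂(X) := (1/n) ∑_{k=1}^{n} (N^{⊗(k−1)} ⊗ P_{1:n−k+1})(X) ⊗ |k⟩⟨k|, and the channel C from A^{⊗(n−1)} to B^{⊗(n−1)}⊗ℂ^n by C(X) := (1/n) ∑_{k=1}^{n} (N^{⊗(k−1)} ⊗ P_{1:n−k})(X) ⊗ |k⟩⟨k|. Then the reduced channel of G₂ obtained by feeding π into the n-th input factor and tracing out the n-th output B-factor equals C: for all X on A^{⊗(n−1)}, tr_{B_n} G₂(X ⊗ π) = C(X). -/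

import Mathlib

open scoped BigOperators
open Matrix
open ComplexOrder

noncomputable section

namespace PaperQI

/-- The trace norm `tr √(MᴴM)` of a complex square matrix (sum of singular values). -/
noncomputable def traceNorm {ι : Type} [Fintype ι] [DecidableEq ι] (M : Matrix ι ι ℂ) : ℝ :=
  (((Matrix.posSemidef_conjTranspose_mul_self M).1.eigenvectorUnitary.1 *
      Matrix.diagonal ((fun x : ℝ => (x : ℂ)) ∘ (√·) ∘ (Matrix.posSemidef_conjTranspose_mul_self M).1.eigenvalues) *
      (star (Matrix.posSemidef_conjTranspose_mul_self M).1.eigenvectorUnitary : Matrix ι ι ℂ)).trace).re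

/-- The trace distance `Δ(ρ,σ) = ½‖ρ − σ‖₁`. -/
noncomputable def traceDist {ι : Type} [Fintype ι] [DecidableEq ι] (ρ σ : Matrix ι ι ℂ) : ℝ :=
  traceNorm (ρ - σ) / 2

/-- A quantum state: a positive semidefinite matrix of unit trace. -/
def IsState {ι : Type} [Fintype ι] (M : Matrix ι ι ℂ) : Prop :=
  M.PosSemidef ∧ M.trace = 1

/-- Kronecker/tensor product of two matrices, on the product index type. -/
def kron {ι κ : Type} (M : Matrix ι ι ℂ) (N : Matrix κ κ ℂ) :
    Matrix (ι × κ) (ι × κ) ℂ := fun p q => M p.1 q.1 * N p.2 q.2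

/-- The `n`-fold tensor power `ρ^{⊗n}`. -/
def tensorPow {ι : Type} (ρ : Matrix ι ι ℂ) (n : ℕ) :
    Matrix (Fin n → ι) (Fin n → ι) ℂ := fun x y => ∏ i, ρ (x i) (y i)

/-- Partial trace over the second tensor factor. -/
noncomputable def ptraceRight {ι κ : Type} [Fintype κ] (M : Matrix (ι × κ) (ι × κ) ℂ) :
    Matrix ι ι ℂ := fun a b => ∑ c, M (a, c) (b, c)

/-- Partial trace over the first tensor factor. -/
noncomputable def ptraceLeft {ι κ : Type} [Fintype ι] (M : Matrix (ι × κ) (ι × κ) ℂ) :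
    Matrix κ κ ℂ := fun a b => ∑ c, M (c, a) (c, b)

/-- Marginal of a multipartite state on `S^{⊗m}` on the `i`-th tensor factor. -/
noncomputable def marginal {ι : Type} [Fintype ι] [DecidableEq ι] {m : ℕ}
    (η : Matrix (Fin m → ι) (Fin m → ι) ℂ) (i : Fin m) : Matrix ι ι ℂ :=
  fun a b => ∑ x : Fin m → ι, if x i = a then η x (Function.update x i b) else 0

/-- The extension `id_τ ⊗ Φ` of a map on matrices, acting blockwise. -/
def rightExt {ι κ τ : Type} (Φ : Matrix ι ι ℂ → Matrix κ κ ℂ) :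
    Matrix (τ × ι) (τ × ι) ℂ → Matrix (τ × κ) (τ × κ) ℂ :=
  fun M p q => Φ (fun x y => M (p.1, x) (q.1, y)) p.2 q.2

/-- The extension `Φ ⊗ id_τ`. -/
def leftExt {ι κ τ : Type} (Φ : Matrix ι ι ℂ → Matrix κ κ ℂ) :
    Matrix (ι × τ) (ι × τ) ℂ → Matrix (κ × τ) (κ × τ) ℂ :=
  fun M p q => Φ (fun x y => M (x, p.2) (y, q.2)) p.1 q.1

/-- Complete positivity: every finite-dimensional extension `id ⊗ Φ` preserves
positive semidefiniteness. -/
def IsCP {ι κ : Type} [Fintype ι] [Fintype κ] (Φ : Matrix ι ι ℂ → Matrix κ κ ℂ) : Prop :=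
  ∀ (n : ℕ) (M : Matrix (Fin n × ι) (Fin n × ι) ℂ), M.PosSemidef →
    (rightExt Φ M).PosSemidef

/-- Trace preserving. -/
def IsTP {ι κ : Type} [Fintype ι] [Fintype κ] (Φ : Matrix ι ι ℂ → Matrix κ κ ℂ) : Prop :=
  ∀ M, (Φ M).trace = M.trace

/-- Trace nonincreasing on positive semidefinite inputs. -/
def IsTNI {ι κ : Type} [Fintype ι] [Fintype κ] (Φ : Matrix ι ι ℂ → Matrix κ κ ℂ) : Prop :=
  ∀ M : Matrix ι ι ℂ, M.PosSemidef → ((Φ M).trace).re ≤ (M.trace).re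

/-- A quantum channel: linear, completely positive and trace preserving. -/
def IsChannel {ι κ : Type} [Fintype ι] [Fintype κ] (Φ : Matrix ι ι ℂ → Matrix κ κ ℂ) : Prop :=
  IsLinearMap ℂ Φ ∧ IsCP Φ ∧ IsTP Φ


/-- The diamond norm `‖Φ‖_⋄ = sup_ρ ‖(id_R ⊗ Φ)(ρ)‖₁`, with reference system `R = A`
(which suffices for maps out of `A`). -/
noncomputable def diamondNorm {ι κ : Type} [Fintype ι] [DecidableEq ι]
    [Fintype κ] [DecidableEq κ] (Φ : Matrix ι ι ℂ → Matrix κ κ ℂ) : ℝ :=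
  sSup {x : ℝ | ∃ ρ : Matrix (ι × ι) (ι × ι) ℂ, IsState ρ ∧ x = traceNorm (rightExt Φ ρ)}

/-- The von Neumann entropy `S(ρ) = −tr(ρ log ρ)`, via eigenvalues. -/
noncomputable def entropy {ι : Type} [Fintype ι] [DecidableEq ι] (ρ : Matrix ι ι ℂ) : ℝ :=
  if h : ρ.IsHermitian then -∑ i, h.eigenvalues i * Real.log (h.eigenvalues i) else 0

/-- The quantum mutual information `I(B:R)_ρ = S(ρ_B) + S(ρ_R) − S(ρ_{BR})` of a bipartite
state (first factor `B`, second factor `R`). -/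
noncomputable def mutualInfo {ι κ : Type} [Fintype ι] [DecidableEq ι]
    [Fintype κ] [DecidableEq κ] (ρ : Matrix (ι × κ) (ι × κ) ℂ) : ℝ :=
  entropy (ptraceRight ρ) + entropy (ptraceLeft ρ) - entropy ρ

/-- The mutual information of a channel, `I(N) = sup_φ I(B:R)_{(id_R ⊗ N)(φ)}`, the
supremum over states `φ` on `R ⊗ A` with `R = A`. -/
noncomputable def channelMI {ι κ : Type} [Fintype ι] [DecidableEq ι]
    [Fintype κ] [DecidableEq κ] (Φ : Matrix ι ι ℂ → Matrix κ κ ℂ) : ℝ :=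
  sSup {x : ℝ | ∃ φ : Matrix (ι × ι) (ι × ι) ℂ, IsState φ ∧ x = mutualInfo (rightExt Φ φ)}

/-- The binary entropy `h₂(x) = −x log x − (1−x) log(1−x)`. -/
noncomputable def binEntropy (x : ℝ) : ℝ :=
  -(x * Real.log x) - (1 - x) * Real.log (1 - x)

/-- Tensor product `Φ ⊗ Ψ` of two maps on matrices. -/
def mapTensor {α₁ β₁ α₂ β₂ : Type} (Φ : Matrix α₁ α₁ ℂ → Matrix β₁ β₁ ℂ)
    (Ψ : Matrix α₂ α₂ ℂ → Matrix β₂ β₂ ℂ) :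
    Matrix (α₁ × α₂) (α₁ × α₂) ℂ → Matrix (β₁ × β₂) (β₁ × β₂) ℂ :=
  rightExt Ψ ∘ leftExt Φ

/-- Relabelling a matrix along an equivalence of index types. -/
def reindexMap {ι κ : Type} (e : ι ≃ κ) : Matrix ι ι ℂ → Matrix κ κ ℂ :=
  fun M => M.submatrix e.symm e.symm

/-- Splitting `n = r + j` tensor factors into the first `r` and the last `j`. -/
def splitEquiv {r j n : ℕ} (h : r + j = n) (α : Type) :
    (Fin n → α) ≃ (Fin r → α) × (Fin j → α) :=
  (Equiv.arrowCongr (finCongr h) (Equiv.refl α)).symm.trans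
    ((Equiv.arrowCongr finSumFinEquiv (Equiv.refl α)).symm.trans
      (Equiv.sumArrowEquivProdArrow (Fin r) (Fin j) α))

/-- The `r`-fold tensor power `Φ^{⊗r}` of a map on matrices, defined by its action on
matrix units. -/
noncomputable def mapPow {α β : Type} [Fintype α] [DecidableEq α]
    (Φ : Matrix α α ℂ → Matrix β β ℂ) (r : ℕ) :
    Matrix (Fin r → α) (Fin r → α) ℂ → Matrix (Fin r → β) (Fin r → β) ℂ :=
  fun M y y' => ∑ x : Fin r → α, ∑ x' : Fin r → α,
    M x x' * ∏ t, Φ (Matrix.single (x t) (x' t) 1) (y t) (y' t)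

/-- The tensor product `Φ ⊗ Ψ` of a map on the first `r` factors with a map on the last
`j` factors, as a map on all `n = r + j` factors. -/
noncomputable def tensorSplit {α β : Type} {r j n : ℕ} (h : r + j = n)
    (Φ : Matrix (Fin r → α) (Fin r → α) ℂ → Matrix (Fin r → β) (Fin r → β) ℂ)
    (Ψ : Matrix (Fin j → α) (Fin j → α) ℂ → Matrix (Fin j → β) (Fin j → β) ℂ) :
    Matrix (Fin n → α) (Fin n → α) ℂ → Matrix (Fin n → β) (Fin n → β) ℂ :=
  reindexMap (splitEquiv h β).symm ∘ mapTensor Φ Ψ ∘ reindexMap (splitEquiv h α)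

/-- The reduced channel `P_{1:i}(X) = tr_{B_{i+1}⋯B_n} P(X ⊗ π^{⊗(n−i)})` of a channel on
`n` tensor factors. -/
noncomputable def reducedCh {α β : Type} [Fintype α] [Fintype β] [DecidableEq β] {n : ℕ}
    (P : Matrix (Fin n → α) (Fin n → α) ℂ → Matrix (Fin n → β) (Fin n → β) ℂ)
    (π : Matrix α α ℂ) (i : ℕ) (hi : i ≤ n) :
    Matrix (Fin i → α) (Fin i → α) ℂ → Matrix (Fin i → β) (Fin i → β) ℂ :=
  fun X a b => ∑ w : Fin n → β,
    if (fun t : Fin i => w (Fin.castLE hi t)) = a then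
      P (fun x y =>
          X (fun t => x (Fin.castLE hi t)) (fun t => y (Fin.castLE hi t)) *
            ∏ s : Fin n, if i ≤ (s : ℕ) then π (x s) (y s) else 1)
        w (fun s : Fin n => if h : (s : ℕ) < i then b ⟨s, h⟩ else w s)
    else 0

/-- The channel `G₂(X) = (1/n) ∑_{k=1}^{n} (N^{⊗(k−1)} ⊗ P_{1:n−k+1})(X) ⊗ |k⟩⟨k|`. -/
noncomputable def G2 {α β : Type} [Fintype α] [DecidableEq α] [Fintype β] [DecidableEq β]
    {n : ℕ} (N : Matrix α α ℂ → Matrix β β ℂ)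
    (P : Matrix (Fin n → α) (Fin n → α) ℂ → Matrix (Fin n → β) (Fin n → β) ℂ)
    (π : Matrix α α ℂ) :
    Matrix (Fin n → α) (Fin n → α) ℂ →
      Matrix ((Fin n → β) × Fin n) ((Fin n → β) × Fin n) ℂ :=
  fun X p q =>
    if p.2 = q.2 then
      (1 / (n : ℂ)) *
        (tensorSplit (by have := p.2.isLt; omega : (p.2 : ℕ) + (n - (p.2 : ℕ)) = n)
          (mapPow N (p.2 : ℕ)) (reducedCh P π (n - (p.2 : ℕ)) (Nat.sub_le n _)) X) p.1 q.1
    else 0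

/-- The catalyst channel `C(X) = (1/n) ∑_{k=1}^{n} (N^{⊗(k−1)} ⊗ P_{1:n−k})(X) ⊗ |k⟩⟨k|`. -/
noncomputable def Ccat {α β : Type} [Fintype α] [DecidableEq α] [Fintype β] [DecidableEq β]
    {n : ℕ} (N : Matrix α α ℂ → Matrix β β ℂ)
    (P : Matrix (Fin n → α) (Fin n → α) ℂ → Matrix (Fin n → β) (Fin n → β) ℂ)
    (π : Matrix α α ℂ) :
    Matrix (Fin (n - 1) → α) (Fin (n - 1) → α) ℂ →
      Matrix ((Fin (n - 1) → β) × Fin n) ((Fin (n - 1) → β) × Fin n) ℂ :=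
  fun X p q =>
    if p.2 = q.2 then
      (1 / (n : ℂ)) *
        (tensorSplit
          (by have := p.2.isLt; omega : (p.2 : ℕ) + (n - 1 - (p.2 : ℕ)) = n - 1)
          (mapPow N (p.2 : ℕ)) (reducedCh P π (n - 1 - (p.2 : ℕ)) (by omega)) X) p.1 q.1
    else 0

/-- Feeding the state `π` into the `n`-th input factor of `G` and tracing out the `n`-th
output `B`-factor (keeping the classical register). -/
noncomputable def feedTraceLast {α β : Type} [Fintype α] [Fintype β] {n : ℕ}
    (G : Matrix (Fin n → α) (Fin n → α) ℂ →
      Matrix ((Fin n → β) × Fin n) ((Fin n → β) × Fin n) ℂ)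
    (π : Matrix α α ℂ)
    (X : Matrix (Fin (n - 1) → α) (Fin (n - 1) → α) ℂ) :
    Matrix ((Fin (n - 1) → β) × Fin n) ((Fin (n - 1) → β) × Fin n) ℂ :=
  fun p q => ∑ w : β,
    G (fun x y =>
        X (fun t => x (Fin.castLE (Nat.sub_le n 1) t))
          (fun t => y (Fin.castLE (Nat.sub_le n 1) t)) *
          ∏ s : Fin n, if n - 1 ≤ (s : ℕ) then π (x s) (y s) else 1)
      ((fun s : Fin n => if h : (s : ℕ) < n - 1 then p.1 ⟨s, h⟩ else w), p.2)
      ((fun s : Fin n => if h : (s : ℕ) < n - 1 then q.1 ⟨s, h⟩ else w), q.2)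

lemma splitEquiv_fst {r j n : ℕ} (h : r + j = n) (γ : Type) (f : Fin n → γ) (t : Fin r) :
    (splitEquiv h γ f).1 t = f ⟨t, by omega⟩ := by
  simp [splitEquiv, Equiv.sumArrowEquivProdArrow, finSumFinEquiv]
  congr 1

lemma splitEquiv_snd {r j n : ℕ} (h : r + j = n) (γ : Type) (f : Fin n → γ) (t : Fin j) :
    (splitEquiv h γ f).2 t = f ⟨r + t, by omega⟩ := by
  simp [splitEquiv, Equiv.sumArrowEquivProdArrow, finSumFinEquiv]
  congr 1

lemma splitEquiv_symm_apply {r j n : ℕ} (h : r + j = n) (γ : Type)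
    (u : Fin r → γ) (x : Fin j → γ) (s : Fin n) :
    (splitEquiv h γ).symm (u, x) s =
      if hs : (s : ℕ) < r then u ⟨s, hs⟩ else x ⟨(s : ℕ) - r, by omega⟩ := by
  simp only [splitEquiv, Equiv.sumArrowEquivProdArrow, finSumFinEquiv,
    Equiv.symm_trans_apply, Equiv.symm_symm, Equiv.coe_fn_mk, Equiv.coe_fn_symm_mk,
    Equiv.arrowCongr_apply, Equiv.refl_symm, Equiv.coe_refl, Function.comp_apply, id_eq,
    Equiv.symm_symm_apply]
  by_cases hs : (s : ℕ) < r
  · rw [dif_pos hs, show (finCongr h).symm s = Fin.castAdd j ⟨s, hs⟩ from Fin.ext rfl,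
      Fin.addCases_left]
    rfl
  · rw [dif_neg hs, show (finCongr h).symm s = Fin.natAdd r ⟨(s:ℕ) - r, by omega⟩ from
      Fin.ext (by simp; omega), Fin.addCases_right]
    rfl

lemma tensorSplit_apply {α β : Type} {r j n : ℕ} (h : r + j = n)
    (Φ : Matrix (Fin r → α) (Fin r → α) ℂ → Matrix (Fin r → β) (Fin r → β) ℂ)
    (Ψ : Matrix (Fin j → α) (Fin j → α) ℂ → Matrix (Fin j → β) (Fin j → β) ℂ)
    (M : Matrix (Fin n → α) (Fin n → α) ℂ) (u v : Fin n → β) :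
    tensorSplit h Φ Ψ M u v =
      Ψ (fun x y => Φ (fun c d =>
            M ((splitEquiv h α).symm (c, x)) ((splitEquiv h α).symm (d, y)))
          (fun t => u ⟨t, by omega⟩) (fun t => v ⟨t, by omega⟩))
        (fun t => u ⟨r + (t : ℕ), by omega⟩) (fun t => v ⟨r + (t : ℕ), by omega⟩) := by
  have h1 : ∀ w : Fin n → β, (splitEquiv h β w).1 = fun t : Fin r => w ⟨t, by omega⟩ :=
    fun w => funext fun t => splitEquiv_fst h β w t
  have h2 : ∀ w : Fin n → β, (splitEquiv h β w).2 = fun t : Fin j => w ⟨r + (t : ℕ), by omega⟩ :=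
    fun w => funext fun t => splitEquiv_snd h β w t
  show (mapTensor Φ Ψ (reindexMap (splitEquiv h α) M)).submatrix
      (splitEquiv h β).symm.symm (splitEquiv h β).symm.symm u v = _
  rw [Equiv.symm_symm]
  show Ψ (fun x y => Φ (fun c d => reindexMap (splitEquiv h α) M (c, x) (d, y))
      (splitEquiv h β u).1 (splitEquiv h β v).1) (splitEquiv h β u).2 (splitEquiv h β v).2 = _
  rw [h1 u, h1 v, h2 u, h2 v]
  rfl

/-- The reduced channel of `G₂` obtained by feeding the maximally mixed
state `π` into the `n`-th input factor and tracing out the `n`-th output `B`-factor equals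
the catalyst channel `C`: the catalyst channel is exactly returned. -/
theorem catalyst_channel_returned {α β : Type} [Fintype α] [DecidableEq α]
    [Fintype β] [DecidableEq β] {n : ℕ} (hn : 1 ≤ n)
    (N : Matrix α α ℂ → Matrix β β ℂ) (hN : IsChannel N)
    (P : Matrix (Fin n → α) (Fin n → α) ℂ → Matrix (Fin n → β) (Fin n → β) ℂ)
    (hP : IsChannel P)
    (π : Matrix α α ℂ) (hπ : π = ((Fintype.card α : ℂ))⁻¹ • (1 : Matrix α α ℂ)) :
    ∀ X : Matrix (Fin (n - 1) → α) (Fin (n - 1) → α) ℂ,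
      feedTraceLast (G2 N P π) π X = Ccat N P π X := by
  intro X
  funext p q
  obtain ⟨a, kp⟩ := p
  obtain ⟨b, kq⟩ := q
  by_cases hk : kp = kq
  · subst hk
    have hkn : (kp : ℕ) < n := kp.isLt
    simp only [feedTraceLast, G2, Ccat, if_pos rfl, if_true, tensorSplit_apply, reducedCh]
    rw [← Finset.mul_sum]
    congr 1
    refine (Finset.sum_congr rfl fun i _ => tensorSplit_apply _ _ _ _ _ _).trans ?_
    dsimp only [reducedCh]
    rw [Finset.sum_comm]
    refine Finset.sum_congr rfl fun w _ => ?_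
    have hwi : n - (kp:ℕ) - 1 < n := by omega
    have hC : ∀ w0 : β,
        ((fun t : Fin (n - (kp:ℕ)) => w (Fin.castLE (Nat.sub_le n (kp:ℕ)) t)) =
          fun t : Fin (n - (kp:ℕ)) =>
            if h : (kp:ℕ) + (t:ℕ) < n - 1 then a ⟨(kp:ℕ) + (t:ℕ), h⟩ else w0)
        ↔ (w0 = w ⟨n - (kp:ℕ) - 1, hwi⟩ ∧
          (fun t : Fin (n - 1 - (kp:ℕ)) => w (Fin.castLE (by omega) t)) =
            fun t : Fin (n - 1 - (kp:ℕ)) => a ⟨(kp:ℕ) + (t:ℕ), by omega⟩) := by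
      intro w0
      constructor
      · intro h
        constructor
        · have h1 := congrFun h ⟨n - (kp:ℕ) - 1, by omega⟩
          rw [dif_neg (by simp; omega)] at h1
          exact h1.symm
        · funext t
          have h1 := congrFun h ⟨(t:ℕ), by omega⟩
          rw [dif_pos (by simp; omega)] at h1
          exact h1
      · rintro ⟨rfl, h2⟩
        funext t
        by_cases ht : (kp:ℕ) + (t:ℕ) < n - 1
        · rw [dif_pos ht]
          exact congrFun h2 ⟨(t:ℕ), by omega⟩
        · rw [dif_neg ht]
          exact congrArg w (Fin.ext (by simp; omega))
    simp only [hC, ite_and]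
    rw [Finset.sum_ite_eq' Finset.univ (w ⟨n - (kp:ℕ) - 1, hwi⟩)]
    simp only [Finset.mem_univ, if_true]
    refine if_congr Iff.rfl ?_ rfl
    refine congrArg₂ (fun M f => P M w f) ?_ ?_
    · funext x y
      simp only [mapPow, Finset.sum_mul]
      refine Finset.sum_congr rfl fun c _ => ?_
      refine Finset.sum_congr rfl fun d _ => ?_
      have hA : ∀ (cc : Fin (kp:ℕ) → α) (z : Fin n → α),
          (fun t : Fin (n-1) =>
            (splitEquiv (by omega : (kp:ℕ) + (n - (kp:ℕ)) = n) α).symm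
              (cc, fun t : Fin (n - (kp:ℕ)) => z (Fin.castLE (Nat.sub_le n (kp:ℕ)) t))
              (Fin.castLE (Nat.sub_le n 1) t)) =
          (splitEquiv (by omega : (kp:ℕ) + (n - 1 - (kp:ℕ)) = n - 1) α).symm
            (cc, fun t : Fin (n - 1 - (kp:ℕ)) => z (Fin.castLE (by omega) t)) := by
        intro cc z
        funext t
        rw [splitEquiv_symm_apply, splitEquiv_symm_apply]
        simp only [Fin.coe_castLE]
        by_cases ht : (t:ℕ) < (kp:ℕ)
        · rw [dif_pos ht, dif_pos ht]
        · rw [dif_neg ht, dif_neg ht]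
          exact congrArg z (Fin.ext rfl)
      have hRg : ∀ (g g' : Fin n → α),
          (∏ s : Fin n, if n - 1 ≤ (s:ℕ) then π (g s) (g' s) else 1) =
            π (g ⟨n-1, by omega⟩) (g' ⟨n-1, by omega⟩) := by
        intro g g'
        rw [Finset.prod_eq_single (⟨n-1, by omega⟩ : Fin n)]
        · rw [if_pos (by simp)]
        · intro s _ hs
          rw [if_neg (fun hle : n - 1 ≤ (s:ℕ) => hs (Fin.ext (show (s:ℕ) = n - 1 by omega)))]
        · exact fun h => absurd (Finset.mem_univ _) h
      have hval : ∀ (cc : Fin (kp:ℕ) → α) (z : Fin n → α),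
          (splitEquiv (by omega : (kp:ℕ) + (n - (kp:ℕ)) = n) α).symm
            (cc, fun t : Fin (n - (kp:ℕ)) => z (Fin.castLE (Nat.sub_le n (kp:ℕ)) t))
            ⟨n-1, by omega⟩ = z ⟨n - (kp:ℕ) - 1, hwi⟩ := by
        intro cc z
        rw [splitEquiv_symm_apply, dif_neg (by simp; omega)]
        exact congrArg z (Fin.ext (show n - 1 - (kp:ℕ) = n - (kp:ℕ) - 1 by omega))
      have e2 : (∏ t : Fin (kp:ℕ), N (Matrix.single (c t) (d t) 1)
            (if h : (t:ℕ) < n - 1 then a ⟨(t:ℕ), h⟩ else w ⟨n - (kp:ℕ) - 1, hwi⟩)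
            (if h : (t:ℕ) < n - 1 then b ⟨(t:ℕ), h⟩ else w ⟨n - (kp:ℕ) - 1, hwi⟩)) =
          ∏ t : Fin (kp:ℕ), N (Matrix.single (c t) (d t) 1)
            (a ⟨(t:ℕ), by omega⟩) (b ⟨(t:ℕ), by omega⟩) :=
        Finset.prod_congr rfl fun t _ => by
          rw [dif_pos (show (t:ℕ) < n - 1 by omega), dif_pos (show (t:ℕ) < n - 1 by omega)]
      have e4 : π (x ⟨n - (kp:ℕ) - 1, hwi⟩) (y ⟨n - (kp:ℕ) - 1, hwi⟩) *
          (∏ s : Fin n, if n - (kp:ℕ) ≤ (s:ℕ) then π (x s) (y s) else 1) =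
          ∏ s : Fin n, if n - 1 - (kp:ℕ) ≤ (s:ℕ) then π (x s) (y s) else 1 := by
        have h1 : ∀ s : Fin n, (if n - 1 - (kp:ℕ) ≤ (s:ℕ) then π (x s) (y s) else 1) =
            (if s = ⟨n - (kp:ℕ) - 1, hwi⟩ then
                π (x ⟨n - (kp:ℕ) - 1, hwi⟩) (y ⟨n - (kp:ℕ) - 1, hwi⟩) else 1) *
              (if n - (kp:ℕ) ≤ (s:ℕ) then π (x s) (y s) else 1) := by
          intro s
          by_cases hs : s = ⟨n - (kp:ℕ) - 1, hwi⟩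
          · subst hs
            rw [if_pos rfl, if_pos (by simp; omega), if_neg (by simp; omega), mul_one]
          · have hv : (s:ℕ) ≠ n - (kp:ℕ) - 1 := fun hc => hs (Fin.ext hc)
            rw [if_neg hs]
            by_cases hs2 : n - (kp:ℕ) ≤ (s:ℕ)
            · rw [if_pos hs2, if_pos (by omega), one_mul]
            · rw [if_neg hs2, if_neg (by omega), mul_one]
        rw [Finset.prod_congr rfl (fun s _ => h1 s), Finset.prod_mul_distrib,
          Finset.prod_ite_eq' Finset.univ, if_pos (Finset.mem_univ _)]
      rw [hRg, hval c x, hval d y, congrArg₂ X (hA c x) (hA d y), e2, ← e4]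
      ring
    · funext s
      by_cases h1 : (s:ℕ) < n - 1 - (kp:ℕ)
      · rw [dif_pos h1, dif_pos (by omega : (s:ℕ) < n - (kp:ℕ)), dif_pos (by omega)]
      · by_cases h2 : (s:ℕ) < n - (kp:ℕ)
        · rw [dif_neg h1, dif_pos h2, dif_neg (by omega)]
          exact congrArg w (Fin.ext (by simp; omega))
        · rw [dif_neg h1, dif_neg h2]
  · simp only [feedTraceLast, G2, Ccat, if_neg hk, Finset.sum_const_zero]
end PaperQI
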